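/- arXiv:1708.06295 — 5 statements merged into one kernel-verified Lean document; each statement's English description precedes it below -/
import Mathlib

section
/- Let F = ⟨Tree, ⊴, Choice, R, R_e⟩ be a jstit frame for Ag, let m ∈ Tree, and let S ∈ Θ_m. Then every element of S has a strict ⊴-predecessor: for every m0 ∈ S there exists m1 ∈ Tree with m1 ⊲ m0. -/
/-! Preliminaries: temporal frames, stit frames, jstit frames, the language of
JA-STIT, jstit models, satisfaction, and the Hilbert system Σ_D(CS). -/

/-- A temporal frame: a nonempty set of moments with a partial order satisfying
historical connection and no backward branching. -/
structure TemporalFrame (Mo : Type) : Type where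
  le : Mo → Mo → Prop
  le_refl : ∀ m, le m m
  le_antisymm : ∀ {m m'}, le m m' → le m' m → m = m'
  le_trans : ∀ {m1 m2 m3}, le m1 m2 → le m2 m3 → le m1 m3
  nonempty : Nonempty Mo
  hist_conn : ∀ m m1, ∃ m2, le m2 m ∧ le m2 m1
  no_backward : ∀ m m1 m2, le m1 m → le m2 m → le m1 m2 ∨ le m2 m1

namespace TemporalFrame

variable {Mo : Type} (T : TemporalFrame Mo)

/-- The strict companion of the temporal order. -/
def lt (m m' : Mo) : Prop := T.le m m' ∧ m ≠ m'

/-- A history is a maximal chain of moments w.r.t. the temporal order. -/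
def IsHistory (h : Set Mo) : Prop :=
  IsChain T.le h ∧ ∀ h' : Set Mo, IsChain T.le h' → h ⊆ h' → h' = h

/-- `T.H m` is the set of histories passing through the moment `m`. -/
def H (m : Mo) : Set (Set Mo) := { h | T.IsHistory h ∧ m ∈ h }

/-- Histories `h` and `g` are undivided at `m`. -/
def Undiv (m : Mo) (h g : Set Mo) : Prop := ∃ m', T.lt m m' ∧ m' ∈ h ∧ m' ∈ g

/-- `m'` is an immediate successor of `m`. -/
def Next (m m' : Mo) : Prop := T.lt m m' ∧ ∀ m'', T.lt m'' m' → T.le m'' m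

/-- Mixed successor condition on (the temporal part of) a frame. -/
def MixSucc : Prop :=
  ∀ m m1 : Mo,
    (T.lt m m1 → ∃ m2, T.le m2 m1 ∧ T.Next m m2) ∨
    (∀ h ∈ T.H m, ∀ g ∈ T.H m, T.Undiv m h g)

end TemporalFrame

/-- A stit frame for an agent community `Ag`: a temporal frame together with a choice
function assigning to each moment and agent a partition of the histories through that
moment, subject to no choice between undivided histories and independence of agents. -/
structure StitFrame (Mo : Type) (Ag : Type) extends TemporalFrame Mo where
  choice : Mo → Ag → Set (Set (Set Mo))
  choice_cell_nonempty : ∀ m j C, C ∈ choice m j → C.Nonempty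
  choice_cell_sub : ∀ m j C, C ∈ choice m j → C ⊆ toTemporalFrame.H m
  choice_cover : ∀ m j h, h ∈ toTemporalFrame.H m → ∃ C ∈ choice m j, h ∈ C
  choice_disjoint : ∀ m j C C', C ∈ choice m j → C' ∈ choice m j →
    (C ∩ C').Nonempty → C = C'
  no_choice_undiv : ∀ m j h h', h ∈ toTemporalFrame.H m → h' ∈ toTemporalFrame.H m →
    toTemporalFrame.Undiv m h h' → ∀ C ∈ choice m j, h ∈ C → h' ∈ C
  independence : ∀ m (f : Ag → Set (Set Mo)), (∀ j, f j ∈ choice m j) →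
    (⋂ j, f j).Nonempty

/-- A justification stit (jstit) frame for `Ag`: a stit frame together with two
epistemic preorders `R ⊆ R_e`, with the temporal order included in `R`. -/
structure JstitFrame (Mo : Type) (Ag : Type) extends StitFrame Mo Ag where
  R : Mo → Mo → Prop
  Re : Mo → Mo → Prop
  R_refl : ∀ m, R m m
  R_trans : ∀ {m1 m2 m3}, R m1 m2 → R m2 m3 → R m1 m3
  Re_refl : ∀ m, Re m m
  Re_trans : ∀ {m1 m2 m3}, Re m1 m2 → Re m2 m3 → Re m1 m3
  R_sub_Re : ∀ {m m'}, R m m' → Re m m'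
  le_sub_R : ∀ {m m'}, le m m' → R m m'

namespace JstitFrame

variable {Mo : Type} {Ag : Type} (F : JstitFrame Mo Ag)

/-- The family `Θ_m` of subsets of the set of moments associated with a moment `m`. -/
def Theta (m : Mo) : Set (Set Mo) :=
  { S | m ∈ S ∧
    (∀ m1 m2, m1 ∈ S → F.Re m1 m2 → m2 ∈ S) ∧
    (∀ m1, (∀ h ∈ F.toTemporalFrame.H m1,
        ∃ m2 ∈ h, F.toTemporalFrame.Next m1 m2 ∧ m2 ∈ S) → m1 ∈ S) ∧
    (∀ m1, m1 ∈ S →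
      (∀ m2, F.toTemporalFrame.lt m2 m1 →
        ∃ m3, F.toTemporalFrame.lt m2 m3 ∧ F.toTemporalFrame.lt m3 m1) →
      ∃ m4, F.toTemporalFrame.lt m4 m1 ∧ m4 ∈ S) }

/-- A jstit frame is unirelational iff `R_e ⊆ R`. -/
def Unirelational : Prop := ∀ m m', F.Re m m' → F.R m m'

/-- Regularity of a jstit frame. -/
def Regular : Prop :=
  ∀ m m1 : Mo, F.toTemporalFrame.lt m m1 →
    (∃ S : Set Mo,
      (∀ m0, F.toTemporalFrame.lt m m0 → F.le m0 m1 → S ∈ F.Theta m0) ∧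
      m ∉ S ∧
      ∃ h' ∈ F.toTemporalFrame.H m,
        (∀ g ∈ F.toTemporalFrame.H m1, ¬ F.toTemporalFrame.Undiv m h' g) ∧
        (∀ m' ∈ h', F.toTemporalFrame.Next m m' → m' ∉ S)) →
    ∃ m2, F.le m2 m1 ∧ F.toTemporalFrame.Next m m2

end JstitFrame

/-- Proof polynomials over proof variables `PVar` and proof constants `PConst`. -/
inductive Pol (PVar PConst : Type) : Type
  | var : PVar → Pol PVar PConst
  | const : PConst → Pol PVar PConst
  | plus : Pol PVar PConst → Pol PVar PConst → Pol PVar PConst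
  | times : Pol PVar PConst → Pol PVar PConst → Pol PVar PConst
  | bang : Pol PVar PConst → Pol PVar PConst

/-- Formulas of JA-STIT. -/
inductive Form (Ag PVar PConst PropVar : Type) : Type
  | pv : PropVar → Form Ag PVar PConst PropVar
  | and : Form Ag PVar PConst PropVar → Form Ag PVar PConst PropVar →
      Form Ag PVar PConst PropVar
  | neg : Form Ag PVar PConst PropVar → Form Ag PVar PConst PropVar
  | stit : Ag → Form Ag PVar PConst PropVar → Form Ag PVar PConst PropVar
  | box : Form Ag PVar PConst PropVar → Form Ag PVar PConst PropVar
  | proves : Pol PVar PConst → Form Ag PVar PConst PropVar → Form Ag PVar PConst PropVar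
  | know : Form Ag PVar PConst PropVar → Form Ag PVar PConst PropVar
  | ann : Pol PVar PConst → Form Ag PVar PConst PropVar

namespace Form

variable {Ag PVar PConst PropVar : Type}

/-- Implication, defined as usual from `¬` and `∧`. -/
def imp (A B : Form Ag PVar PConst PropVar) : Form Ag PVar PConst PropVar :=
  neg (and A (neg B))

/-- Disjunction, defined as usual. -/
def or (A B : Form Ag PVar PConst PropVar) : Form Ag PVar PConst PropVar :=
  neg (and (neg A) (neg B))

/-- The dual `◇` of the historical necessity modality. -/
def dia (A : Form Ag PVar PConst PropVar) : Form Ag PVar PConst PropVar :=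
  neg (box (neg A))

/-- Falsum, defined as usual. -/
def bot [Inhabited PropVar] : Form Ag PVar PConst PropVar :=
  and (pv default) (neg (pv default))

end Form

/-- Conjunction of a nonempty list of formulas (head plus tail). -/
def andList {Ag PVar PConst PropVar : Type} :
    Form Ag PVar PConst PropVar → List (Form Ag PVar PConst PropVar) →
      Form Ag PVar PConst PropVar
  | A, [] => A
  | A, B :: L => Form.and A (andList B L)

/-- Disjunction of a list of formulas. -/
def bigOr {Ag PVar PConst PropVar : Type} [Inhabited PropVar] :
    List (Form Ag PVar PConst PropVar) → Form Ag PVar PConst PropVar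
  | [] => Form.bot
  | [A] => A
  | A :: B :: L => Form.or A (bigOr (B :: L))

/-- A classical propositional tautology: a formula true under every Boolean valuation
commuting with `∧` and `¬` (all other formulas being treated as atoms). -/
def Tautology {Ag PVar PConst PropVar : Type} (A : Form Ag PVar PConst PropVar) : Prop :=
  ∀ v : Form Ag PVar PConst PropVar → Bool,
    (∀ B C, v (Form.and B C) = (v B && v C)) →
    (∀ B, v (Form.neg B) = !v B) →
    v A = true

/-- The axiom schemes (A0)–(A9) of Σ_D. -/
inductive Ax {Ag PVar PConst PropVar : Type} : Form Ag PVar PConst PropVar → Prop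
  -- (A0) classical propositional tautologies
  | a0 {A} : Tautology A → Ax A
  -- (A1) S5 axioms for □
  | boxK {A B} : Ax (Form.imp (Form.box (Form.imp A B))
      (Form.imp (Form.box A) (Form.box B)))
  | boxT {A} : Ax (Form.imp (Form.box A) A)
  | box4 {A} : Ax (Form.imp (Form.box A) (Form.box (Form.box A)))
  | box5 {A} : Ax (Form.imp (Form.neg (Form.box A)) (Form.box (Form.neg (Form.box A))))
  -- (A1) S5 axioms for each [j]
  | stitK {j : Ag} {A B} : Ax (Form.imp (Form.stit j (Form.imp A B))
      (Form.imp (Form.stit j A) (Form.stit j B)))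
  | stitT {j : Ag} {A} : Ax (Form.imp (Form.stit j A) A)
  | stit4 {j : Ag} {A} : Ax (Form.imp (Form.stit j A) (Form.stit j (Form.stit j A)))
  | stit5 {j : Ag} {A} : Ax (Form.imp (Form.neg (Form.stit j A))
      (Form.stit j (Form.neg (Form.stit j A))))
  -- (A2)
  | a2 {j : Ag} {A} : Ax (Form.imp (Form.box A) (Form.stit j A))
  -- (A3), for pairwise distinct agents
  | a3 {p : Ag × Form Ag PVar PConst PropVar} {L : List (Ag × Form Ag PVar PConst PropVar)} :
      (((p :: L).map Prod.fst).Nodup) →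
      Ax (Form.imp
        (andList (Form.dia (Form.stit p.1 p.2)) (L.map fun q => Form.dia (Form.stit q.1 q.2)))
        (Form.dia (andList (Form.stit p.1 p.2) (L.map fun q => Form.stit q.1 q.2))))
  -- (A4)
  | a4 {s t : Pol PVar PConst} {A B} : Ax (Form.imp (Form.proves s (Form.imp A B))
      (Form.imp (Form.proves t A) (Form.proves (Pol.times s t) B)))
  -- (A5)
  | a5 {t : Pol PVar PConst} {A} : Ax (Form.imp (Form.proves t A)
      (Form.and (Form.proves (Pol.bang t) (Form.proves t A)) (Form.know A)))
  -- (A6)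
  | a6 {s t : Pol PVar PConst} {A} : Ax (Form.imp
      (Form.or (Form.proves s A) (Form.proves t A)) (Form.proves (Pol.plus s t) A))
  -- (A7) S4 axioms for K
  | knowK {A B} : Ax (Form.imp (Form.know (Form.imp A B))
      (Form.imp (Form.know A) (Form.know B)))
  | knowT {A} : Ax (Form.imp (Form.know A) A)
  | know4 {A} : Ax (Form.imp (Form.know A) (Form.know (Form.know A)))
  -- (A8)
  | a8 {A} : Ax (Form.imp (Form.know A) (Form.box (Form.know (Form.box A))))
  -- (A9)
  | a9 {t : Pol PVar PConst} : Ax (Form.imp (Form.box (Form.ann t))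
      (Form.know (Form.box (Form.ann t))))

/-- Iterated prefixes `c_n : … : c_1 : A` of instances `A` of the axiom schemes. -/
inductive ConstIter {Ag PVar PConst PropVar : Type} : Form Ag PVar PConst PropVar → Prop
  | base {c : PConst} {A} : Ax A → ConstIter (Form.proves (Pol.const c) A)
  | step {c : PConst} {B} : ConstIter B → ConstIter (Form.proves (Pol.const c) B)

/-- A constant specification: a set of formulas of the form `c_n : … : c_1 : A` with `A`
an instance of (A0)–(A9), closed under deleting the outermost constant. -/
def IsConstSpec {Ag PVar PConst PropVar : Type}
    (CS : Set (Form Ag PVar PConst PropVar)) : Prop :=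
  (∀ B ∈ CS, ConstIter B) ∧
  ∀ (c c' : PConst) (B : Form Ag PVar PConst PropVar),
    Form.proves (Pol.const c) (Form.proves (Pol.const c') B) ∈ CS →
    Form.proves (Pol.const c') B ∈ CS

/-- Provability in Σ_D(CS): axioms (A0)–(A9), modus ponens (R1), K-necessitation (R2),
the rule (R_D) and the rule (R_CS). -/
inductive Proves {Ag PVar PConst PropVar : Type} [Inhabited PropVar]
    (CS : Set (Form Ag PVar PConst PropVar)) : Form Ag PVar PConst PropVar → Prop
  | ax {A} : Ax A → Proves CS A
  | mp {A B} : Proves CS (Form.imp A B) → Proves CS A → Proves CS B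
  | nec {A} : Proves CS A → Proves CS (Form.know A)
  | rd {A : Form Ag PVar PConst PropVar} {ts ss : List (Pol PVar PConst)}
      (hne : ts ++ ss ≠ []) :
      Proves CS (Form.imp (Form.know A)
        (bigOr ((ts.map fun t => Form.neg (Form.box (Form.ann t))) ++
                (ss.map fun s => Form.box (Form.ann s))))) →
      Proves CS (Form.imp (Form.know A)
        (bigOr ((ts.map fun t => Form.neg (Form.ann t)) ++
                (ss.map fun s => Form.ann s))))
  | rcs {B} : B ∈ CS → Proves CS B

/-- Γ is consistent in Σ_D(CS): no finite nonempty conjunction of members of Γ provably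
implies falsum. -/
def CSConsistent {Ag PVar PConst PropVar : Type} [Inhabited PropVar]
    (CS Γ : Set (Form Ag PVar PConst PropVar)) : Prop :=
  ¬ ∃ (A : Form Ag PVar PConst PropVar) (L : List (Form Ag PVar PConst PropVar)),
      A ∈ Γ ∧ (∀ B ∈ L, B ∈ Γ) ∧ Proves CS (Form.imp (andList A L) Form.bot)

/-- A jstit model for `Ag`: a jstit frame together with `Act`, an admissible evidence
function `E` and an evaluation `V`, subject to the semantical constraints. -/
structure JstitModel (Mo : Type) (Ag PVar PConst PropVar : Type)
    extends JstitFrame Mo Ag where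
  act : Mo → Set Mo → Set (Pol PVar PConst)
  ev : Mo → Pol PVar PConst → Set (Form Ag PVar PConst PropVar)
  val : PropVar → Set (Mo × Set Mo)
  -- monotonicity of evidence
  ev_mono : ∀ m m' t, Re m m' → ev m t ⊆ ev m' t
  -- evidence closure properties
  ev_app : ∀ m s t A B, Form.imp A B ∈ ev m s → A ∈ ev m t → B ∈ ev m (Pol.times s t)
  ev_sum_left : ∀ m s t, ev m s ⊆ ev m (Pol.plus s t)
  ev_sum_right : ∀ m s t, ev m t ⊆ ev m (Pol.plus s t)
  ev_bang : ∀ m t A, A ∈ ev m t → Form.proves t A ∈ ev m (Pol.bang t)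
  -- expansion of presented proofs
  expansion : ∀ m m' h, toTemporalFrame.lt m' m → h ∈ toTemporalFrame.H m →
    act m' h ⊆ act m h
  -- no new proofs guaranteed
  no_new : ∀ m t, (∀ h ∈ toTemporalFrame.H m, t ∈ act m h) →
    ∃ m' h, toTemporalFrame.lt m' m ∧ h ∈ toTemporalFrame.H m ∧ t ∈ act m' h
  -- presenting a new proof makes histories divide
  divide : ∀ m h h', h ∈ toTemporalFrame.H m → h' ∈ toTemporalFrame.H m →
    toTemporalFrame.Undiv m h h' → act m h = act m h'
  -- presented proofs are epistemically transparent
  transparent : ∀ m m' t, Re m m' → (∀ h ∈ toTemporalFrame.H m, t ∈ act m h) →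
    ∀ h' ∈ toTemporalFrame.H m', t ∈ act m' h'

namespace JstitModel

variable {Mo Ag PVar PConst PropVar : Type}

/-- `Act_m`, the set of proofs presented at `m` under every history through `m`. -/
def ActM (M : JstitModel Mo Ag PVar PConst PropVar) (m : Mo) : Set (Pol PVar PConst) :=
  { t | ∀ h ∈ M.toTemporalFrame.H m, t ∈ M.act m h }

/-- The satisfaction relation for jstit models. -/
def Sat (M : JstitModel Mo Ag PVar PConst PropVar) :
    Form Ag PVar PConst PropVar → Mo → Set Mo → Prop
  | Form.pv p, m, h => (m, h) ∈ M.val p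
  | Form.and A B, m, h => M.Sat A m h ∧ M.Sat B m h
  | Form.neg A, m, h => ¬ M.Sat A m h
  | Form.stit j A, m, h => ∀ h' C, C ∈ M.choice m j → h ∈ C → h' ∈ C → M.Sat A m h'
  | Form.box A, m, _ => ∀ h' ∈ M.toTemporalFrame.H m, M.Sat A m h'
  | Form.know A, m, _ => ∀ m' h', M.R m m' → h' ∈ M.toTemporalFrame.H m' → M.Sat A m' h'
  | Form.proves t A, m, _ => A ∈ M.ev m t ∧
      ∀ m' h', M.Re m m' → h' ∈ M.toTemporalFrame.H m' → M.Sat A m' h'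
  | Form.ann t, m, h => t ∈ M.act m h

/-- Validity of a formula in a jstit model. -/
def Valid (M : JstitModel Mo Ag PVar PConst PropVar)
    (A : Form Ag PVar PConst PropVar) : Prop :=
  ∀ m h, h ∈ M.toTemporalFrame.H m → M.Sat A m h

end JstitModel

/-- CS-normality of a jstit model. -/
def CSNormal {Mo Ag PVar PConst PropVar : Type}
    (CS : Set (Form Ag PVar PConst PropVar))
    (M : JstitModel Mo Ag PVar PConst PropVar) : Prop :=
  ∀ (c : PConst) (m : Mo) (A : Form Ag PVar PConst PropVar),
    Form.proves (Pol.const c) A ∈ CS → A ∈ M.ev m (Pol.const c)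

/-- Lemma 1: every element of a member `S` of `Θ_m` has a strict
temporal predecessor. -/
theorem stmt0 {Mo Ag : Type} [Finite Ag] (F : JstitFrame Mo Ag) (m : Mo)
    (S : Set Mo) (hS : S ∈ F.Theta m) :
    ∀ m0 ∈ S, ∃ m1 : Mo, F.toTemporalFrame.lt m1 m0 := by
  intro m0 hm0
  obtain ⟨-, -, -, h4⟩ := hS
  by_contra hno
  push_neg at hno
  obtain ⟨m4, hm4, -⟩ := h4 m0 hm0 (fun m2 h2 => absurd h2 (hno m2))
  exact hno m4 hm4
end

section
/- Let F = ⟨Tree, ⊴, Choice, R, R_e⟩ be a jstit frame for Ag whose stit reduct C = ⟨Tree, ⊴, Choice⟩ is a mixed successor frame. Then F is regular. -/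
/-- Lemma 4.1: if the stit reduct of a jstit frame is a mixed successor
frame, then the jstit frame is regular. -/
theorem stmt5 {Mo Ag : Type} [Finite Ag] (F : JstitFrame Mo Ag)
    (hmix : F.toTemporalFrame.MixSucc) : F.Regular := by
  intro m m1 hlt hS
  rcases hmix m m1 with hsucc | hund
  · exact hsucc hlt
  · exfalso
    obtain ⟨S, -, -, h', hh', hng, -⟩ := hS
    -- build a history through both m and m1
    have hchain : IsChain F.toTemporalFrame.le ({m, m1} : Set Mo) := by
      intro a ha b hb hab
      rcases ha with rfl | ha <;> rcases hb with rfl | hb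
      · exact absurd rfl hab
      · cases hb; exact Or.inl hlt.1
      · cases ha; exact Or.inr hlt.1
      · cases ha; cases hb; exact absurd rfl hab
    obtain ⟨g, hgmax, hsub⟩ := hchain.exists_maxChain
    have hgh : F.toTemporalFrame.IsHistory g := ⟨hgmax.1, fun t ht hsubt => (hgmax.2 ht hsubt).symm⟩
    have hgm : g ∈ F.toTemporalFrame.H m := ⟨hgh, hsub (Or.inl rfl)⟩
    have hgm1 : g ∈ F.toTemporalFrame.H m1 := ⟨hgh, hsub (Or.inr rfl)⟩
    exact hng g hgm1 (hund h' hh' g hgm)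
end

section
/- Let C = ⟨Tree, ⊴, Choice⟩ be a stit frame for Ag that is not a mixed successor frame, and let F = ⟨Tree, ⊴, Choice, R, R_e⟩ with R = R_e = Tree × Tree. Then F is a jstit frame for Ag, F is regular, and the stit reduct of F is not a mixed successor frame. -/
/-- Lemma 4.2: extending a non-mixed-successor stit frame with the total
relations `R = R_e = Tree × Tree` yields a regular jstit frame whose stit reduct is not
a mixed successor frame. -/
theorem stmt6 {Mo Ag : Type} [Finite Ag] (C : StitFrame Mo Ag)
    (hC : ¬ C.toTemporalFrame.MixSucc) :
    ∃ F : JstitFrame Mo Ag, F.toStitFrame = C ∧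
      F.R = (fun _ _ => True) ∧ F.Re = (fun _ _ => True) ∧
      F.Regular ∧ ¬ F.toStitFrame.toTemporalFrame.MixSucc := by
  refine ⟨{ C with
    R := fun _ _ => True, Re := fun _ _ => True,
    R_refl := fun _ => trivial, R_trans := fun _ _ => trivial,
    Re_refl := fun _ => trivial, Re_trans := fun _ _ => trivial,
    R_sub_Re := fun _ => trivial, le_sub_R := fun _ => trivial }, rfl, rfl, rfl, ?_, hC⟩
  intro m m1 hlt ⟨S, hTheta, hmS, _⟩
  have hS := hTheta m1 hlt (C.le_refl m1)
  exact absurd (hS.2.1 m1 m hS.1 trivial) hmS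
end

section
/- Let CS be a constant specification, let x and y be distinct proof variables, and let C = ⟨Tree, ⊴, Choice⟩ be a stit frame for Ag that is not a mixed successor frame. Then there is a CS-normal jstit model M based on C and a moment-history pair (m, h) of M such that M, m, h ⊭ K(□Ex ∨ ¬□Ey) → (Ex ∨ ¬Ey). -/
namespace TemporalFrame

variable {Mo : Type} (T : TemporalFrame Mo)

lemma hist_of_chain {s : Set Mo} (hs : IsChain T.le s) :
    ∃ hh : Set Mo, T.IsHistory hh ∧ s ⊆ hh := by
  obtain ⟨t, ht, hst⟩ := hs.exists_maxChain
  exact ⟨t, ⟨ht.1, fun h' hc hsub => (ht.2 hc hsub).symm⟩, hst⟩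

lemma H_nonempty (m : Mo) : ∃ hh, hh ∈ T.H m := by
  obtain ⟨hh, hhist, hsub⟩ := T.hist_of_chain (s := {m})
    (fun a ha b hb hab => absurd (ha.trans hb.symm) hab)
  exact ⟨hh, hhist, hsub rfl⟩

lemma mem_hist_of_le {hh : Set Mo} (hhist : T.IsHistory hh) {b m' : Mo}
    (hb : b ∈ hh) (hle : T.le m' b) : m' ∈ hh := by
  have hch : IsChain T.le (insert m' hh) := by
    intro a ha c hc hac
    rcases ha with rfl | ha
    · rcases hc with rfl | hc
      · exact absurd rfl hac
      · rcases eq_or_ne c b with rfl | hcb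
        · exact Or.inl hle
        · rcases hhist.1 hc hb hcb with h1 | h1
          · exact (T.no_backward b c a h1 hle).symm
          · exact Or.inl (T.le_trans hle h1)
    · rcases hc with rfl | hc
      · rcases eq_or_ne a b with rfl | hab
        · exact Or.inr hle
        · rcases hhist.1 ha hb hab with h1 | h1
          · exact T.no_backward b a c h1 hle
          · exact Or.inr (T.le_trans hle h1)
      · exact hhist.1 ha hc hac
  have := hhist.2 _ hch (Set.subset_insert _ _)
  rw [← this]; exact Set.mem_insert _ _

lemma undiv_symm {m : Mo} {h g : Set Mo} (hu : T.Undiv m h g) : T.Undiv m g h :=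
  let ⟨a, h1, h2, h3⟩ := hu; ⟨a, h1, h3, h2⟩

lemma undiv_trans {m : Mo} {h1 h2 h3 : Set Mo} (H1 : T.IsHistory h1)
    (H2 : T.IsHistory h2) (H3 : T.IsHistory h3)
    (u12 : T.Undiv m h1 h2) (u23 : T.Undiv m h2 h3) : T.Undiv m h1 h3 := by
  obtain ⟨a, hma, ha1, ha2⟩ := u12
  obtain ⟨b, hmb, hb2, hb3⟩ := u23
  rcases eq_or_ne a b with rfl | hab
  · exact ⟨a, hma, ha1, hb3⟩
  · rcases H2.1 ha2 hb2 hab with hle | hle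
    · exact ⟨a, hma, ha1, T.mem_hist_of_le H3 hb3 hle⟩
    · exact ⟨b, hmb, T.mem_hist_of_le H1 ha1 hle, hb3⟩

lemma dense_step {m0 m1 m' : Mo}
    (hnonext : ∀ m2, T.le m2 m1 → ¬ T.Next m0 m2)
    (hlt : T.lt m0 m') (hle : T.le m' m1) :
    ∃ m'', T.lt m0 m'' ∧ T.lt m'' m' := by
  by_contra hno
  push_neg at hno
  apply hnonext m' hle
  refine ⟨hlt, fun m'' hm'' => ?_⟩
  rcases T.no_backward m' m'' m0 hm''.1 hlt.1 with h1 | h1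
  · exact h1
  · rcases eq_or_ne m0 m'' with rfl | hne
    · exact T.le_refl _
    · exact absurd hm'' (hno m'' ⟨h1, hne⟩)

end TemporalFrame

/-- Lemma 5: every stit frame outside the mixed successor class carries a
CS-normal jstit model falsifying `K(□Ex ∨ ¬□Ey) → (Ex ∨ ¬Ey)` at some moment-history
pair. -/
theorem stmt9 {Mo Ag PVar PConst PropVar : Type} [Finite Ag]
    [Countable PVar] [Infinite PVar] [Countable PConst] [Infinite PConst]
    [Countable PropVar] [Infinite PropVar] [Inhabited PropVar]
    (CS : Set (Form Ag PVar PConst PropVar)) (hCS : IsConstSpec CS)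
    (x y : PVar) (hxy : x ≠ y)
    (C : StitFrame Mo Ag) (hC : ¬ C.toTemporalFrame.MixSucc) :
    ∃ M : JstitModel Mo Ag PVar PConst PropVar,
      M.toJstitFrame.toStitFrame = C ∧ CSNormal CS M ∧
      ∃ m h, h ∈ M.toTemporalFrame.H m ∧
        ¬ M.Sat (Form.imp
            (Form.know (Form.or (Form.box (Form.ann (Pol.var x)))
              (Form.neg (Form.box (Form.ann (Pol.var y))))))
            (Form.or (Form.ann (Pol.var x)) (Form.neg (Form.ann (Pol.var y))))) m h := by
  classical
  unfold TemporalFrame.MixSucc at hC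
  push_neg at hC
  obtain ⟨m0, m1, ⟨hlt01, hnonext⟩, hB⟩ := hC
  obtain ⟨h₀, hh₀, g₀, hg₀, hnd⟩ := hB
  -- a history through both m0 and m1
  obtain ⟨h, hhH1⟩ := C.toTemporalFrame.H_nonempty m1
  have hm0h : m0 ∈ h := C.toTemporalFrame.mem_hist_of_le hhH1.1 hhH1.2 hlt01.1
  have hhH0 : h ∈ C.toTemporalFrame.H m0 := ⟨hhH1.1, hm0h⟩
  -- a history through m0 divided from h at m0
  have hgex : ∃ g, g ∈ C.toTemporalFrame.H m0 ∧ ¬ C.toTemporalFrame.Undiv m0 g h := by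
    by_contra hcon
    push_neg at hcon
    exact hnd (C.toTemporalFrame.undiv_trans hh₀.1 hhH1.1 hg₀.1 (hcon h₀ hh₀)
      (C.toTemporalFrame.undiv_symm (hcon g₀ hg₀)))
  obtain ⟨g, hgH, hgnd⟩ := hgex
  -- the region where both proofs have been presented on all histories
  set W : Mo → Prop :=
    fun m' => ∃ a, a ∈ h ∧ C.toTemporalFrame.lt m0 a ∧ C.le a m' with hW
  have hWmono : ∀ {m' m''}, W m' → C.le m' m'' → W m'' := by
    rintro m' m'' ⟨a, h1, h2, h3⟩ hle
    exact ⟨a, h1, h2, C.le_trans h3 hle⟩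
  have hWm0 : ¬ W m0 := by
    rintro ⟨a, _, h2, h3⟩
    exact h2.2 (C.le_antisymm h2.1 h3)
  set act : Mo → Set Mo → Set (Pol PVar PConst) := fun m' h' =>
    {t | (W m' ∧ (t = Pol.var x ∨ t = Pol.var y)) ∨
         (m' = m0 ∧ C.toTemporalFrame.Undiv m0 h' h ∧ t = Pol.var y)} with hact
  have hsettled : ∀ m' t, (∀ h'' ∈ C.toTemporalFrame.H m', t ∈ act m' h'') →
      W m' ∧ (t = Pol.var x ∨ t = Pol.var y) := by
    intro m' t hall
    obtain ⟨h₁, h₁H⟩ := C.toTemporalFrame.H_nonempty m'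
    rcases hall h₁ h₁H with hres | ⟨rfl, _, _⟩
    · exact hres
    · rcases hall g hgH with hres | ⟨_, hund, _⟩
      · exact absurd hres.1 hWm0
      · exact absurd hund hgnd
  have hWnext : ∀ m', W m' → ∃ m'', C.toTemporalFrame.lt m'' m' ∧ W m'' := by
    rintro m' ⟨a, hah, h0a, ham'⟩
    rcases eq_or_ne a m' with rfl | hne
    · have hstep : ∃ m'', C.toTemporalFrame.lt m0 m'' ∧ C.toTemporalFrame.lt m'' a := by
        by_cases hle1 : C.le a m1
        · exact C.toTemporalFrame.dense_step hnonext h0a hle1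
        · have hne1 : m1 ≠ a := by
            rintro rfl; exact hle1 (C.le_refl _)
          have hcomp : C.le m1 a := by
            rcases hhH1.1.1 hhH1.2 hah hne1 with h1 | h1
            · exact h1
            · exact absurd h1 hle1
          exact ⟨m1, hlt01, hcomp, hne1⟩
      obtain ⟨m'', h1, h2⟩ := hstep
      exact ⟨m'', h2, m'', C.toTemporalFrame.mem_hist_of_le hhH1.1 hah h2.1, h1,
        C.le_refl _⟩
    · exact ⟨a, ⟨ham', hne⟩, a, hah, h0a, C.le_refl _⟩
  refine ⟨{
    toStitFrame := C
    R := C.le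
    Re := C.le
    R_refl := C.le_refl
    R_trans := fun h1 h2 => C.le_trans h1 h2
    Re_refl := C.le_refl
    Re_trans := fun h1 h2 => C.le_trans h1 h2
    R_sub_Re := fun h1 => h1
    le_sub_R := fun h1 => h1
    act := act
    ev := fun _ _ => Set.univ
    val := fun _ => ∅
    ev_mono := fun _ _ _ _ => Set.subset_univ _
    ev_app := fun _ _ _ _ _ _ _ => Set.mem_univ _
    ev_sum_left := fun _ _ _ => Set.subset_univ _
    ev_sum_right := fun _ _ _ => Set.subset_univ _
    ev_bang := fun _ _ _ _ => Set.mem_univ _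
    expansion := ?_
    no_new := ?_
    divide := ?_
    transparent := ?_ }, rfl, fun _ _ _ _ => Set.mem_univ _, ?_⟩
  · -- expansion
    rintro m m' h' hlt hH t ht
    rcases ht with ⟨hw, hxy'⟩ | ⟨rfl, hund, rfl⟩
    · exact Or.inl ⟨hWmono hw hlt.1, hxy'⟩
    · refine Or.inl ⟨?_, Or.inr rfl⟩
      obtain ⟨b, hb0, hbh', hbh⟩ := hund
      have hmh' : m ∈ h' := hH.2
      rcases eq_or_ne b m with rfl | hbm
      · exact ⟨b, hbh, hb0, C.le_refl _⟩
      · rcases hH.1.1 hbh' hmh' hbm with h1 | h1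
        · exact ⟨b, hbh, hb0, h1⟩
        · exact ⟨m, C.toTemporalFrame.mem_hist_of_le hhH1.1 hbh h1, hlt, C.le_refl _⟩
  · -- no_new
    rintro m t hall
    obtain ⟨hw, hxy'⟩ := hsettled m t hall
    obtain ⟨m'', hlt'', hw''⟩ := hWnext m hw
    obtain ⟨h₁, h₁H⟩ := C.toTemporalFrame.H_nonempty m
    exact ⟨m'', h₁, hlt'', h₁H, Or.inl ⟨hw'', hxy'⟩⟩
  · -- divide
    rintro m h1 h2 h1H h2H hund
    have key : ∀ (ha hb : Set Mo), ha ∈ C.toTemporalFrame.H m →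
        hb ∈ C.toTemporalFrame.H m → C.toTemporalFrame.Undiv m ha hb →
        act m ha ⊆ act m hb := by
      rintro ha hb haH hbH hu t ht
      rcases ht with hl | ⟨rfl, hu2, rfl⟩
      · exact Or.inl hl
      · exact Or.inr ⟨rfl, C.toTemporalFrame.undiv_trans hbH.1 haH.1 hhH1.1
          (C.toTemporalFrame.undiv_symm hu) hu2, rfl⟩
    exact Set.Subset.antisymm (key h1 h2 h1H h2H hund)
      (key h2 h1 h2H h1H (C.toTemporalFrame.undiv_symm hund))
  · -- transparent
    rintro m m' t hre hall h' h'H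
    obtain ⟨hw, hxy'⟩ := hsettled m t hall
    exact Or.inl ⟨hWmono hw hre, hxy'⟩
  · -- the falsifying pair
    refine ⟨m0, h, hhH0, ?_⟩
    simp only [Form.imp, Form.or, JstitModel.Sat]
    intro hcon
    apply hcon
    constructor
    · -- K(□Ex ∨ ¬□Ey) holds at (m0, h)
      intro m' h' hle h'H
      rintro ⟨hnx, hny⟩
      by_cases hWm' : W m'
      · exact hnx (fun h'' _ => Or.inl ⟨hWm', Or.inl rfl⟩)
      · exact hny (fun hally => hWm' (hsettled m' (Pol.var y) hally).1)
    · -- Ex ∨ ¬Ey fails at (m0, h)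
      intro hcon2
      apply hcon2
      refine ⟨?_, fun k => k ?_⟩
      · rintro (⟨hw, _⟩ | ⟨_, _, heq⟩)
        · exact hWm0 hw
        · exact hxy (by injection heq)
      · exact Or.inr ⟨rfl, ⟨m1, hlt01, hhH1.2, hhH1.2⟩, rfl⟩
end

section
/- Let CS be a constant specification, let x and y be distinct proof variables, and let T = ⟨Tree, ⊴⟩ be a temporal frame that is not a mixed successor frame. Then there is a CS-normal jstit model M based on T and a moment-history pair (m, h) of M such that M, m, h ⊭ K(□Ex ∨ ¬□Ey) → (Ex ∨ ¬Ey). -/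
section AuxStmt11

variable {Mo : Type}

private lemma aux_hist_down (T : TemporalFrame Mo) {h : Set Mo} (hh : T.IsHistory h)
    {n m : Mo} (hn : n ∈ h) (hm : T.le m n) : m ∈ h := by
  have hins : IsChain T.le (insert m h) := by
    refine hh.1.insert fun b hb hne => ?_
    by_cases hbn : b = n
    · subst hbn; exact Or.inl hm
    · rcases hh.1 hb hn hbn with h1 | h1
      · rcases T.no_backward n b m h1 hm with h2 | h2
        · exact Or.inr h2
        · exact Or.inl h2
      · exact Or.inl (T.le_trans hm h1)
  have := hh.2 _ hins (Set.subset_insert _ _)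
  rw [← this]; exact Set.mem_insert _ _

private lemma aux_exists_hist (T : TemporalFrame Mo) {s : Set Mo} (hs : IsChain T.le s) :
    ∃ h : Set Mo, T.IsHistory h ∧ s ⊆ h := by
  obtain ⟨t, ht, hst⟩ := hs.exists_maxChain
  exact ⟨t, ⟨ht.1, fun h' hc hsub => (ht.2 hc hsub).symm⟩, hst⟩

end AuxStmt11

/-- Corollary 2: every temporal frame outside the mixed successor class
carries a CS-normal jstit model falsifying `K(□Ex ∨ ¬□Ey) → (Ex ∨ ¬Ey)` at some
moment-history pair. -/
theorem stmt11 {Mo Ag PVar PConst PropVar : Type} [Finite Ag]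
    [Countable PVar] [Infinite PVar] [Countable PConst] [Infinite PConst]
    [Countable PropVar] [Infinite PropVar] [Inhabited PropVar]
    (CS : Set (Form Ag PVar PConst PropVar)) (hCS : IsConstSpec CS)
    (x y : PVar) (hxy : x ≠ y)
    (T : TemporalFrame Mo) (hT : ¬ T.MixSucc) :
    ∃ M : JstitModel Mo Ag PVar PConst PropVar,
      M.toTemporalFrame = T ∧ CSNormal CS M ∧
      ∃ m h, h ∈ M.toTemporalFrame.H m ∧
        ¬ M.Sat (Form.imp
            (Form.know (Form.or (Form.box (Form.ann (Pol.var x)))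
              (Form.neg (Form.box (Form.ann (Pol.var y))))))
            (Form.or (Form.ann (Pol.var x)) (Form.neg (Form.ann (Pol.var y))))) m h := by
  classical
  simp only [TemporalFrame.MixSucc] at hT
  push_neg at hT
  obtain ⟨ms, m1, ⟨hlt1, hnonext⟩, ha, haH, hb, hbH, hnund⟩ := hT
  -- basic helpers
  have hHne : ∀ m : Mo, ∃ h, h ∈ T.H m := by
    intro m
    obtain ⟨h, hh, hsub⟩ := aux_exists_hist T (Set.Subsingleton.isChain
      (Set.subsingleton_singleton (a := m)) (r := T.le))
    exact ⟨h, hh, hsub rfl⟩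
  have hltle : ∀ {a b c : Mo}, T.lt a b → T.le b c → T.lt a c := by
    rintro a b c ⟨hab, hne⟩ hbc
    refine ⟨T.le_trans hab hbc, fun hEq => ?_⟩
    subst hEq
    exact hne (T.le_antisymm hab hbc)
  have hlelt : ∀ {a b c : Mo}, T.le a b → T.lt b c → T.lt a c := by
    rintro a b c hab ⟨hbc, hne⟩
    refine ⟨T.le_trans hab hbc, fun hEq => ?_⟩
    subst hEq
    exact hne (T.le_antisymm hbc hab)
  -- a history through both ms and m1
  have hpair : IsChain T.le ({ms, m1} : Set Mo) := by
    intro a hA b hB hne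
    simp only [Set.mem_insert_iff, Set.mem_singleton_iff] at hA hB
    rcases hA with rfl | rfl <;> rcases hB with rfl | rfl
    · exact absurd rfl hne
    · exact Or.inl hlt1.1
    · exact Or.inr hlt1.1
    · exact absurd rfl hne
  obtain ⟨h0, hh0, hsub0⟩ := aux_exists_hist T hpair
  have hmsh0 : ms ∈ h0 := hsub0 (by simp)
  have hm1h0 : m1 ∈ h0 := hsub0 (by simp)
  -- a history through ms divided from h0 at ms
  obtain ⟨g', hg'H, hmsg', hg'nd⟩ :
      ∃ g, T.IsHistory g ∧ ms ∈ g ∧ ¬ ∃ n, T.lt ms n ∧ n ∈ h0 ∧ n ∈ g := by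
    by_cases hA : ∃ n, T.lt ms n ∧ n ∈ h0 ∧ n ∈ ha
    · refine ⟨hb, hbH.1, hbH.2, fun hB => ?_⟩
      obtain ⟨na, hna, hna0, hnaa⟩ := hA
      obtain ⟨nb, hnb, hnb0, hnbb⟩ := hB
      apply hnund
      by_cases hne : na = nb
      · exact ⟨na, hna, hnaa, hne ▸ hnbb⟩
      · rcases hh0.1 hna0 hnb0 hne with hle | hle
        · exact ⟨na, hna, hnaa, aux_hist_down T hbH.1 hnbb hle⟩
        · exact ⟨nb, hnb, aux_hist_down T haH.1 hnaa hle, hnbb⟩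
    · exact ⟨ha, haH.1, haH.2, hA⟩
  -- density above ms along h0
  have hdense : ∀ m, T.lt ms m → m ∈ h0 → ∃ k, T.lt ms k ∧ T.lt k m ∧ k ∈ h0 := by
    intro m hm hm0
    by_cases he : T.le m m1
    · have hnN := hnonext m he
      rw [TemporalFrame.Next] at hnN
      push_neg at hnN
      obtain ⟨k, hkm, hknle⟩ := hnN hm
      rcases T.no_backward m k ms hkm.1 hm.1 with h1 | h1
      · exact absurd h1 hknle
      · refine ⟨k, ⟨h1, fun hEq => hknle (by rw [← hEq]; exact T.le_refl ms)⟩, hkm,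
          aux_hist_down T hh0 hm0 hkm.1⟩
    · have hle : T.le m1 m := by
        rcases hh0.1 hm0 hm1h0 (fun hEq => he (hEq ▸ T.le_refl m)) with h1 | h1
        · exact absurd h1 he
        · exact h1
      exact ⟨m1, hlt1, ⟨hle, fun hEq => he (hEq ▸ T.le_refl m)⟩, hm1h0⟩
  -- from undividedness from h0 to a point of h0 below m
  have hYX : ∀ m (h : Set Mo), T.IsHistory h → m ∈ h → T.lt ms m →
      (∃ n, T.lt ms n ∧ n ∈ h0 ∧ n ∈ h) → ∃ n, T.lt ms n ∧ n ∈ h0 ∧ T.le n m := by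
    rintro m h hh hmh hm ⟨n, hn, hn0, hnh⟩
    by_cases he : n = m
    · exact ⟨n, hn, hn0, he ▸ T.le_refl n⟩
    · rcases hh.1 hnh hmh he with h1 | h1
      · exact ⟨n, hn, hn0, h1⟩
      · exact ⟨m, hm, aux_hist_down T hh0 hn0 h1, T.le_refl m⟩
  have hXY : ∀ m m' (h' : Set Mo), T.IsHistory h' → m' ∈ h' → T.le m m' →
      (∃ n, T.lt ms n ∧ n ∈ h0 ∧ T.le n m) → ∃ n, T.lt ms n ∧ n ∈ h0 ∧ n ∈ h' := by
    rintro m m' h' hh' hm' hmm' ⟨n, hn, hn0, hnm⟩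
    exact ⟨n, hn, hn0, aux_hist_down T hh' hm' (T.le_trans hnm hmm')⟩
  have hYdiv : ∀ m (h h' : Set Mo), T.IsHistory h → T.IsHistory h' →
      (∃ p, T.lt m p ∧ p ∈ h ∧ p ∈ h') → T.le ms m →
      (∃ n, T.lt ms n ∧ n ∈ h0 ∧ n ∈ h) → ∃ n, T.lt ms n ∧ n ∈ h0 ∧ n ∈ h' := by
    rintro m h h' hh hh' ⟨p, hp, hph, hph'⟩ hmsm ⟨n, hn, hn0, hnh⟩
    by_cases he : n = p
    · exact ⟨n, hn, hn0, he ▸ hph'⟩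
    · rcases hh.1 hnh hph he with h1 | h1
      · exact ⟨n, hn, hn0, aux_hist_down T hh' hph' h1⟩
      · exact ⟨p, hlelt hmsm hp, aux_hist_down T hh0 hn0 h1, hph'⟩
  refine ⟨{
    toTemporalFrame := T
    choice := fun m _ => {T.H m}
    choice_cell_nonempty := by
      intro m j C hC
      rw [Set.mem_singleton_iff] at hC; subst hC
      exact hHne m
    choice_cell_sub := by
      intro m j C hC
      rw [Set.mem_singleton_iff] at hC; subst hC
      exact subset_rfl
    choice_cover := fun m j h hh => ⟨T.H m, rfl, hh⟩
    choice_disjoint := by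
      intro m j C C' hC hC' _
      rw [Set.mem_singleton_iff] at hC hC'
      rw [hC, hC']
    no_choice_undiv := by
      intro m j h h' hh hh' _ C hC _
      rw [Set.mem_singleton_iff] at hC; subst hC
      exact hh'
    independence := by
      intro m f hf
      obtain ⟨h, hh⟩ := hHne m
      refine ⟨h, Set.mem_iInter.2 fun j => ?_⟩
      rw [Set.mem_singleton_iff.mp (hf j)]
      exact hh
    R := T.le
    Re := T.le
    R_refl := T.le_refl
    R_trans := fun h1 h2 => T.le_trans h1 h2
    Re_refl := T.le_refl
    Re_trans := fun h1 h2 => T.le_trans h1 h2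
    R_sub_Re := fun h => h
    le_sub_R := fun h => h
    act := fun m h => {t | (t = Pol.var y ∧ T.le ms m ∧ ∃ n, T.lt ms n ∧ n ∈ h0 ∧ n ∈ h) ∨
        (t = Pol.var x ∧ T.lt ms m ∧ ∃ n, T.lt ms n ∧ n ∈ h0 ∧ T.le n m)}
    ev := fun _ _ => Set.univ
    val := fun _ => ∅
    ev_mono := fun _ _ _ _ => Set.Subset.rfl
    ev_app := fun _ _ _ _ _ _ _ => Set.mem_univ _
    ev_sum_left := fun _ _ _ => Set.subset_univ _
    ev_sum_right := fun _ _ _ => Set.subset_univ _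
    ev_bang := fun _ _ _ _ => Set.mem_univ _
    expansion := by
      intro m m' hist hlt hhist t ht
      simp only [Set.mem_setOf_eq] at ht ⊢
      rcases ht with ⟨rfl, hle, hex⟩ | ⟨rfl, hx1, n, hn, hn0, hnm⟩
      · exact Or.inl ⟨rfl, T.le_trans hle hlt.1, hex⟩
      · exact Or.inr ⟨rfl, hltle hx1 hlt.1, n, hn, hn0, T.le_trans hnm hlt.1⟩
    no_new := by
      intro m t hAll
      obtain ⟨h1, hh1⟩ := hHne m
      have ht1 := hAll h1 hh1
      simp only [Set.mem_setOf_eq] at ht1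
      rcases ht1 with ⟨rfl, hle, hU⟩ | ⟨rfl, hltm, n, hn, hn0, hnm⟩
      · rcases eq_or_ne ms m with rfl | hne
        · rcases hAll g' ⟨hg'H, hmsg'⟩ with ⟨_, _, hU'⟩ | ⟨hEq, _⟩
          · exact absurd hU' hg'nd
          · exact absurd (Pol.var.inj hEq).symm hxy
        · exact ⟨ms, h1, ⟨hle, hne⟩, hh1, Or.inl ⟨rfl, T.le_refl ms, hU⟩⟩
      · rcases eq_or_ne n m with rfl | hne
        · obtain ⟨k, hk1, hk2, hk0⟩ := hdense n hn hn0
          exact ⟨k, h1, hk2, hh1, Or.inr ⟨rfl, hk1, k, hk1, hk0, T.le_refl k⟩⟩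
        · exact ⟨n, h1, ⟨hnm, hne⟩, hh1, Or.inr ⟨rfl, hn, n, hn, hn0, T.le_refl n⟩⟩
    divide := by
      intro m h h' hh hh' hU
      obtain ⟨p, hp, hph, hph'⟩ := hU
      ext t
      simp only [Set.mem_setOf_eq]
      constructor
      · rintro (⟨rfl, hle, hex⟩ | hx)
        · exact Or.inl ⟨rfl, hle, hYdiv m h h' hh.1 hh'.1 ⟨p, hp, hph, hph'⟩ hle hex⟩
        · exact Or.inr hx
      · rintro (⟨rfl, hle, hex⟩ | hx)
        · exact Or.inl ⟨rfl, hle, hYdiv m h' h hh'.1 hh.1 ⟨p, hp, hph', hph⟩ hle hex⟩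
        · exact Or.inr hx
    transparent := by
      intro m m' t hRe hAll h' hh'
      obtain ⟨h1, hh1⟩ := hHne m
      have ht1 := hAll h1 hh1
      rcases ht1 with ⟨rfl, hle, hU⟩ | ⟨rfl, hltm, n, hn, hn0, hnm⟩
      · rcases eq_or_ne ms m with rfl | hne
        · rcases hAll g' ⟨hg'H, hmsg'⟩ with ⟨_, _, hU'⟩ | ⟨hEq, _⟩
          · exact absurd hU' hg'nd
          · exact absurd (Pol.var.inj hEq).symm hxy
        · have hXm := hYX m h1 hh1.1 hh1.2 ⟨hle, hne⟩ hU
          exact Or.inl ⟨rfl, T.le_trans hle hRe, hXY m m' h' hh'.1 hh'.2 hRe hXm⟩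
      · exact Or.inr ⟨rfl, hltle hltm hRe, n, hn, hn0, T.le_trans hnm hRe⟩
  }, rfl, fun c m A _ => Set.mem_univ _, ms, h0, ⟨hh0, hmsh0⟩, ?_⟩
  -- the falsification
  have hEy : ((Pol.var y : Pol PVar PConst) = Pol.var y ∧ T.le ms ms ∧
      ∃ n, T.lt ms n ∧ n ∈ h0 ∧ n ∈ h0) ∨ ((Pol.var y : Pol PVar PConst) = Pol.var x ∧
      T.lt ms ms ∧ ∃ n, T.lt ms n ∧ n ∈ h0 ∧ T.le n ms) :=
    Or.inl ⟨rfl, T.le_refl ms, m1, hlt1, hm1h0, hm1h0⟩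
  intro hsat
  simp only [Form.imp, Form.or, JstitModel.Sat, not_and, not_not, not_forall,
    not_exists] at hsat
  refine (hsat ?_ ?_) hEy
  · intro m' h' hle hh' hex
    rcases eq_or_ne ms m' with rfl | hne
    · refine ⟨g', ⟨hg'H, hmsg'⟩, ?_⟩
      rintro (⟨_, _, hU⟩ | ⟨_, hltss, _⟩)
      · exact hg'nd hU
      · exact hltss.2 rfl
    · by_cases hC : ∃ n, T.lt ms n ∧ n ∈ h0 ∧ T.le n m'
      · obtain ⟨g, hgH, hgx⟩ := hex
        exact absurd (Or.inr ⟨rfl, ⟨hle, hne⟩, hC⟩) hgx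
      · refine ⟨h', hh', ?_⟩
        rintro (⟨_, _, hU⟩ | ⟨hEq, _, _⟩)
        · exact hC (hYX m' h' hh'.1 hh'.2 ⟨hle, hne⟩ hU)
        · exact hxy (Pol.var.inj hEq).symm
  · rintro (⟨hEq, _⟩ | ⟨_, hltss, _⟩)
    · exact hxy (Pol.var.inj hEq)
    · exact hltss.2 rfl
end
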